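/- Let E : I² → ℝ be a quasideviation. For every n ∈ ℕ and x_1,…,x_n ∈ I there exists a unique u ∈ I with E(x_1,u) + ⋯ + E(x_n,u) = 0; moreover, if not all x_i are equal then min(x_1,…,x_n) < u < max(x_1,…,x_n). -/
import Mathlib

private lemma qd_sign_pos {r : ℝ} (h : Real.sign r = 1) : 0 < r := by
  rcases lt_trichotomy r 0 with h' | h' | h'
  · rw [Real.sign_of_neg h'] at h; norm_num at h
  · rw [h', Real.sign_zero] at h; norm_num at h
  · exact h'

private lemma qd_sign_neg {r : ℝ} (h : Real.sign r = -1) : r < 0 := by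
  rcases lt_trichotomy r 0 with h' | h' | h'
  · exact h'
  · rw [h', Real.sign_zero] at h; norm_num at h
  · rw [Real.sign_of_pos h'] at h; norm_num at h

/-- existence and uniqueness of the quasideviation mean, and strict
internality for nonconstant vectors. -/
theorem quasideviation_mean_exists_unique (I : Set ℝ) (hIopen : IsOpen I)
    (hIconn : I.OrdConnected) (E : ℝ → ℝ → ℝ)
    (hD1 : ∀ x ∈ I, ∀ u ∈ I, Real.sign (E x u) = Real.sign (x - u))
    (hD2 : ∀ x ∈ I, ContinuousOn (fun u => E x u) I)
    (hD3 : ∀ x ∈ I, ∀ y ∈ I, x < y →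
      StrictAntiOn (fun u => E x u / E y u) (Set.Ioo x y))
    (n : ℕ) (hn : 0 < n) (x : Fin n → ℝ) (hx : ∀ i, x i ∈ I) :
    (∃! u, u ∈ I ∧ ∑ i, E (x i) u = 0) ∧
    ∀ u ∈ I, ∑ i, E (x i) u = 0 → (¬ ∀ i j, x i = x j) →
      Finset.univ.inf' (⟨⟨0, hn⟩, Finset.mem_univ _⟩ : Finset.univ.Nonempty) x < u ∧
      u < Finset.univ.sup' (⟨⟨0, hn⟩, Finset.mem_univ _⟩ : Finset.univ.Nonempty) x := by
  -- basic sign consequences of (D1)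
  have hpos : ∀ a ∈ I, ∀ u ∈ I, u < a → 0 < E a u := by
    intro a ha u hu h
    exact qd_sign_pos (by rw [hD1 a ha u hu, Real.sign_of_pos (by linarith : (0:ℝ) < a - u)])
  have hneg : ∀ a ∈ I, ∀ u ∈ I, a < u → E a u < 0 := by
    intro a ha u hu h
    exact qd_sign_neg (by rw [hD1 a ha u hu, Real.sign_of_neg (by linarith : a - u < (0:ℝ))])
  have hzero : ∀ a ∈ I, E a a = 0 := by
    intro a ha
    have := hD1 a ha a ha
    rw [sub_self, Real.sign_zero] at this
    exact Real.sign_eq_zero_iff.mp this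
  have hEzero : ∀ a ∈ I, ∀ u ∈ I, E a u = 0 → a = u := by
    intro a ha u hu h
    have := hD1 a ha u hu
    rw [h, Real.sign_zero] at this
    have := Real.sign_eq_zero_iff.mp this.symm
    linarith
  set f : ℝ → ℝ := fun u => ∑ i, E (x i) u with hf
  -- if f u = 0 and all x i ≥ u then all x i = u
  have hall : ∀ u ∈ I, f u = 0 → (∀ i, u ≤ x i) → ∀ i, x i = u := by
    intro u hu hfu hle i
    have h0 : ∀ j ∈ Finset.univ, (0:ℝ) ≤ E (x j) u := by
      intro j _
      rcases eq_or_lt_of_le (hle j) with h | h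
      · rw [← h]; exact le_of_eq (hzero u hu).symm
      · exact (hpos (x j) (hx j) u hu h).le
    have := (Finset.sum_eq_zero_iff_of_nonneg h0).mp hfu i (Finset.mem_univ i)
    exact hEzero (x i) (hx i) u hu this
  have hall' : ∀ u ∈ I, f u = 0 → (∀ i, x i ≤ u) → ∀ i, x i = u := by
    intro u hu hfu hle i
    have h0 : ∀ j ∈ Finset.univ, (0:ℝ) ≤ -E (x j) u := by
      intro j _
      rcases eq_or_lt_of_le (hle j) with h | h
      · rw [h]; rw [hzero u hu]; norm_num
      · have := hneg (x j) (hx j) u hu h; linarith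
    have hsum : ∑ j, -E (x j) u = 0 := by
      rw [Finset.sum_neg_distrib, neg_eq_zero]
      exact hfu
    have := (Finset.sum_eq_zero_iff_of_nonneg h0).mp hsum i (Finset.mem_univ i)
    exact hEzero (x i) (hx i) u hu (by linarith)
  -- key monotonicity: if f u = 0 and u < v then f v < 0
  have hkey : ∀ u ∈ I, ∀ v ∈ I, u < v → f u = 0 → f v < 0 := by
    intro u hu v hv huv hfu
    by_cases hJ : ∃ j, x j < u
    · obtain ⟨j₀, hj₀⟩ := hJ
      set J : Finset (Fin n) := Finset.univ.filter (fun j => x j < u) with hJdef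
      have hJne : J.Nonempty := ⟨j₀, by simp [hJdef, hj₀]⟩
      set c : ℝ := J.inf' hJne (fun j => E (x j) v / E (x j) u) with hc
      have hmemJ : ∀ j ∈ J, x j < u := by intro j hj; simpa [hJdef] using hj
      have hcpos : 0 < c := by
        rw [hc, Finset.lt_inf'_iff]
        intro j hj
        have h1 : E (x j) u < 0 := hneg _ (hx j) u hu (hmemJ j hj)
        have h2 : E (x j) v < 0 := hneg _ (hx j) v hv ((hmemJ j hj).trans huv)
        exact div_pos_of_neg_of_neg h2 h1
      -- termwise bound
      have hterm : ∀ i, E (x i) v ≤ c * E (x i) u := by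
        intro i
        rcases lt_trichotomy (x i) u with h | h | h
        · have hiJ : i ∈ J := by simp [hJdef, h]
          have hle : c ≤ E (x i) v / E (x i) u := Finset.inf'_le _ hiJ
          have h1 : E (x i) u < 0 := hneg _ (hx i) u hu h
          calc E (x i) v = (E (x i) v / E (x i) u) * E (x i) u :=
                (div_mul_cancel₀ _ h1.ne).symm
            _ ≤ c * E (x i) u := mul_le_mul_of_nonpos_right hle h1.le
        · rw [h, hzero u hu, mul_zero]
          exact (hneg u hu v hv huv).le
        · rcases le_or_gt (x i) v with h2 | h2
          · have hEu : 0 < E (x i) u := hpos _ (hx i) u hu h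
            have hEv : E (x i) v ≤ 0 := by
              rcases eq_or_lt_of_le h2 with h3 | h3
              · rw [h3]; exact (hzero v hv).le
              · exact (hneg _ (hx i) v hv h3).le
            nlinarith
          · -- x i > v : use (D3) against each j ∈ J
            have hEu : 0 < E (x i) u := hpos _ (hx i) u hu h
            have hEv : 0 < E (x i) v := hpos _ (hx i) v hv h2
            have hlt : E (x i) v / E (x i) u < c := by
              rw [hc, Finset.lt_inf'_iff]
              intro j hj
              have hju : x j < u := hmemJ j hj
              have hanti := hD3 (x j) (hx j) (x i) (hx i) (by linarith)
              have hmu : u ∈ Set.Ioo (x j) (x i) := ⟨hju, by linarith⟩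
              have hmv : v ∈ Set.Ioo (x j) (x i) := ⟨by linarith, h2⟩
              have hrat := hanti hmu hmv huv
              simp only at hrat
              have hju' : E (x j) u < 0 := hneg _ (hx j) u hu hju
              have hjv' : E (x j) v < 0 := hneg _ (hx j) v hv (by linarith)
              rw [div_lt_div_iff₀ hEv hEu] at hrat
              rw [lt_div_iff_of_neg hju', div_mul_eq_mul_div, lt_div_iff₀ hEu]
              nlinarith
            have : E (x i) v < c * E (x i) u := by
              calc E (x i) v = (E (x i) v / E (x i) u) * E (x i) u :=
                    (div_mul_cancel₀ _ hEu.ne').symm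
                _ < c * E (x i) u := mul_lt_mul_of_pos_right hlt hEu
            exact this.le
      -- some index with x i > u gives a strict bound
      have hex : ∃ i, u < x i := by
        by_contra hcon
        push_neg at hcon
        have := hall' u hu hfu hcon j₀
        linarith
      obtain ⟨i₀, hi₀⟩ := hex
      have hstrict : E (x i₀) v < c * E (x i₀) u := by
        have hEu : 0 < E (x i₀) u := hpos _ (hx i₀) u hu hi₀
        rcases le_or_gt (x i₀) v with h2 | h2
        · have hEv : E (x i₀) v ≤ 0 := by
            rcases eq_or_lt_of_le h2 with h3 | h3
            · rw [h3]; exact (hzero v hv).le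
            · exact (hneg _ (hx i₀) v hv h3).le
          nlinarith
        · have hEv : 0 < E (x i₀) v := hpos _ (hx i₀) v hv h2
          have hlt : E (x i₀) v / E (x i₀) u < c := by
            rw [hc, Finset.lt_inf'_iff]
            intro j hj
            have hju : x j < u := hmemJ j hj
            have hanti := hD3 (x j) (hx j) (x i₀) (hx i₀) (by linarith)
            have hrat := hanti (⟨hju, by linarith⟩ : u ∈ Set.Ioo (x j) (x i₀))
              (⟨by linarith, h2⟩ : v ∈ Set.Ioo (x j) (x i₀)) huv
            simp only at hrat
            have hju' : E (x j) u < 0 := hneg _ (hx j) u hu hju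
            have hjv' : E (x j) v < 0 := hneg _ (hx j) v hv (by linarith)
            rw [div_lt_div_iff₀ hEv hEu] at hrat
            rw [lt_div_iff_of_neg hju', div_mul_eq_mul_div, lt_div_iff₀ hEu]
            nlinarith
          calc E (x i₀) v = (E (x i₀) v / E (x i₀) u) * E (x i₀) u :=
                (div_mul_cancel₀ _ hEu.ne').symm
            _ < c * E (x i₀) u := by exact mul_lt_mul_of_pos_right hlt hEu
      have : f v < ∑ i, c * E (x i) u :=
        Finset.sum_lt_sum (fun i _ => hterm i) ⟨i₀, Finset.mem_univ i₀, hstrict⟩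
      have h0 : (∑ i, E (x i) u) = 0 := hfu
      rwa [← Finset.mul_sum, h0, mul_zero] at this
    · -- all x i ≥ u, hence all equal u, hence f v < 0
      push_neg at hJ
      have hallu : ∀ i, x i = u := hall u hu hfu (fun i => hJ i)
      have : ∀ i ∈ Finset.univ, E (x i) v < 0 := by
        intro i _
        rw [hallu i]
        exact hneg u hu v hv huv
      have hne : (Finset.univ : Finset (Fin n)).Nonempty := ⟨⟨0, hn⟩, Finset.mem_univ _⟩
      calc f v < ∑ _i : Fin n, (0:ℝ) := Finset.sum_lt_sum_of_nonempty hne this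
        _ = 0 := by simp
  -- min and max
  have hne : (Finset.univ : Finset (Fin n)).Nonempty := ⟨⟨0, hn⟩, Finset.mem_univ _⟩
  set m := Finset.univ.inf' hne x with hm
  set M := Finset.univ.sup' hne x with hM
  obtain ⟨a, -, ham⟩ := Finset.exists_mem_eq_inf' hne x
  obtain ⟨b, -, hbM⟩ := Finset.exists_mem_eq_sup' hne x
  have hmI : m ∈ I := by rw [hm, ham]; exact hx a
  have hMI : M ∈ I := by rw [hM, hbM]; exact hx b
  have hmM : m ≤ M := (Finset.inf'_le x (Finset.mem_univ ⟨0, hn⟩)).trans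
    (Finset.le_sup' x (Finset.mem_univ ⟨0, hn⟩))
  have hmle : ∀ i, m ≤ x i := fun i => Finset.inf'_le x (Finset.mem_univ i)
  have hMge : ∀ i, x i ≤ M := fun i => Finset.le_sup' x (Finset.mem_univ i)
  have hIcc : Set.Icc m M ⊆ I := hIconn.out hmI hMI
  -- f is continuous on Icc m M
  have hcont : ContinuousOn f (Set.Icc m M) :=
    (continuousOn_finset_sum Finset.univ (fun i _ => hD2 (x i) (hx i))).mono hIcc
  have hfm : 0 ≤ f m := Finset.sum_nonneg (fun i _ => by
    rcases eq_or_lt_of_le (hmle i) with h | h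
    · rw [← h]; exact le_of_eq (hzero m hmI).symm
    · exact (hpos (x i) (hx i) m hmI h).le)
  have hfM : f M ≤ 0 := Finset.sum_nonpos (fun i _ => by
    rcases eq_or_lt_of_le (hMge i) with h | h
    · rw [h]; exact le_of_eq (hzero M hMI)
    · exact (hneg (x i) (hx i) M hMI h).le)
  obtain ⟨u, huIcc, hfu⟩ : ∃ u ∈ Set.Icc m M, f u = 0 := by
    have := intermediate_value_Icc' hmM hcont
    have h0 : (0:ℝ) ∈ Set.Icc (f M) (f m) := ⟨hfM, hfm⟩
    obtain ⟨u, hu1, hu2⟩ := this h0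
    exact ⟨u, hu1, hu2⟩
  have huI : u ∈ I := hIcc huIcc
  constructor
  · refine ⟨u, ⟨huI, hfu⟩, ?_⟩
    rintro v ⟨hvI, hfv⟩
    rcases lt_trichotomy v u with h | h | h
    · exact absurd hfu (ne_of_lt (hkey v hvI u huI h hfv))
    · exact h
    · exact absurd hfv (ne_of_lt (hkey u huI v hvI h hfu))
  · intro w hwI hfw hnc
    constructor
    · by_contra hcon
      push_neg at hcon
      have : ∀ i, x i = w := hall w hwI hfw (fun i => hcon.trans (hmle i))
      exact hnc (fun i j => by rw [this i, this j])
    · by_contra hcon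
      push_neg at hcon
      have : ∀ i, x i = w := hall' w hwI hfw (fun i => (hMge i).trans hcon)
      exact hnc (fun i j => by rw [this i, this j])
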